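/- Let 0 < α < 1 and y₀ ∈ ℝ, and consider the fifth-order ODE f⁽⁵⁾ = ±|f|^{α-1}f with initial data f⁽ʲ⁾(y₀) = α_j, j = 0,...,4. If Σ_{j=0}^4 |α_j| > 0, then the initial value problem has at most one C⁵ solution on some neighbourhood of y₀. -/

import Mathlib

open Set intervalIntegral

noncomputable def Nfun (α s : ℝ) : ℝ := |s| ^ (α - 1) * s

lemma Nfun_neg (α s : ℝ) : Nfun α (-s) = -Nfun α s := by
  unfold Nfun
  rw [abs_neg]
  ring

lemma Nfun_of_pos {α s : ℝ} (hs : 0 < s) : Nfun α s = s ^ α := by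
  rw [Nfun, abs_of_pos hs, ← Real.rpow_add_one hs.ne']
  ring_nf

lemma abs_Nfun_le {α : ℝ} (hα : 0 < α) (s : ℝ) : |Nfun α s| ≤ |s| ^ α := by
  rcases eq_or_ne s 0 with rfl | hs
  · simp [Nfun, Real.zero_rpow hα.ne']
  · have habs : (0:ℝ) < |s| := abs_pos.2 hs
    rw [Nfun, abs_mul, abs_of_nonneg (Real.rpow_nonneg (abs_nonneg s) _),
      ← Real.rpow_add_one habs.ne']
    ring_nf
    exact le_refl _

lemma rpow_le_add_one {x α : ℝ} (hx : 0 ≤ x) (h0 : 0 ≤ α) (h1 : α ≤ 1) : x ^ α ≤ x + 1 := by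
  rcases le_total x 1 with hx1 | hx1
  · calc x ^ α ≤ 1 := Real.rpow_le_one hx hx1 h0
    _ ≤ x + 1 := by linarith
  · calc x ^ α ≤ x ^ (1:ℝ) := Real.rpow_le_rpow_of_exponent_le hx1 h1
    _ = x := Real.rpow_one x
    _ ≤ x + 1 := by linarith

lemma contN {α : ℝ} (hα : 0 < α) : Continuous (Nfun α) := by
  rw [continuous_iff_continuousAt]
  intro x
  rcases eq_or_ne x 0 with rfl | hx
  · have h1 : ContinuousAt (fun s : ℝ => |s| ^ α) 0 :=
      (Real.continuousAt_rpow_const _ _ (Or.inr hα.le)).comp continuous_abs.continuousAt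
    have h0 : (fun s : ℝ => |s| ^ α) 0 = 0 := by
      simp [Real.zero_rpow hα.ne']
    have : Filter.Tendsto (Nfun α) (nhds 0) (nhds 0) := by
      apply squeeze_zero_norm (fun s => abs_Nfun_le hα s)
      have h2 := h1.tendsto
      simp only [abs_zero, Real.zero_rpow hα.ne'] at h2
      exact h2
    have hN0 : Nfun α 0 = 0 := by simp [Nfun]
    rw [ContinuousAt, hN0]
    exact this
  · have h1 : ContinuousAt (fun s : ℝ => |s| ^ (α - 1)) x :=
      (Real.continuousAt_rpow_const _ _ (Or.inl (abs_ne_zero.2 hx))).comp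
        continuous_abs.continuousAt
    exact h1.mul continuousAt_id

lemma N_lip {α m a b : ℝ} (hα : α ∈ Ioo (0:ℝ) 1) (hm : 0 < m) (ha : m ≤ a) (hb : m ≤ b) :
    |Nfun α a - Nfun α b| ≤ α * m ^ (α - 1) * |a - b| := by
  have key : ∀ u v : ℝ, m ≤ u → m ≤ v → v ≤ u →
      Nfun α u - Nfun α v ≤ α * m ^ (α - 1) * (u - v) := by
    intro u v hu hv hvu
    rcases eq_or_lt_of_le hvu with rfl | hlt
    · norm_num
    · have hupos : 0 < u := lt_of_lt_of_le hm hu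
      have hvpos : 0 < v := lt_of_lt_of_le hm hv
      have hcont : ContinuousOn (fun s : ℝ => s ^ α) (Icc v u) := by
        intro s hs
        exact ((Real.continuousAt_rpow_const _ _ (Or.inr hα.1.le)).continuousWithinAt)
      have hderiv : ∀ s ∈ Ioo v u, HasDerivAt (fun s : ℝ => s ^ α) (α * s ^ (α - 1)) s := by
        intro s hs
        have hs0 : s ≠ 0 := (lt_trans hvpos hs.1).ne'
        simpa [mul_comm] using Real.hasDerivAt_rpow_const (p := α) (Or.inl hs0)
      obtain ⟨c, hc, hceq⟩ := exists_hasDerivAt_eq_slope (fun s : ℝ => s ^ α)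
        (fun s => α * s ^ (α - 1)) hlt hcont hderiv
      have hcm : m ≤ c := le_of_lt (lt_of_le_of_lt hv hc.1)
      have hcpos : 0 < c := lt_of_lt_of_le hm hcm
      have hle : c ^ (α - 1) ≤ m ^ (α - 1) :=
        Real.rpow_le_rpow_of_nonpos hm hcm (by linarith [hα.2])
      have heq2 : u ^ α - v ^ α = α * c ^ (α - 1) * (u - v) := by
        rw [hceq, div_mul_cancel₀ _ (by linarith : u - v ≠ 0)]
      rw [Nfun_of_pos hupos, Nfun_of_pos hvpos, heq2]
      have : α * c ^ (α - 1) ≤ α * m ^ (α - 1) := by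
        apply mul_le_mul_of_nonneg_left hle hα.1.le
      nlinarith [this, sub_pos.2 hlt]
  rcases le_total b a with hba | hab
  · rw [abs_of_nonneg (by linarith : (0:ℝ) ≤ a - b)]
    have h2 : 0 ≤ Nfun α a - Nfun α b := by
      rw [Nfun_of_pos (lt_of_lt_of_le hm ha), Nfun_of_pos (lt_of_lt_of_le hm hb)]
      have := Real.rpow_le_rpow (le_of_lt (lt_of_lt_of_le hm hb)) hba hα.1.le
      linarith
    rw [abs_of_nonneg h2]
    exact key a b ha hb hba
  · rw [abs_sub_comm, abs_sub_comm a b, abs_of_nonneg (by linarith : (0:ℝ) ≤ b - a)]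
    have h2 : 0 ≤ Nfun α b - Nfun α a := by
      rw [Nfun_of_pos (lt_of_lt_of_le hm ha), Nfun_of_pos (lt_of_lt_of_le hm hb)]
      have := Real.rpow_le_rpow (le_of_lt (lt_of_lt_of_le hm ha)) hab hα.1.le
      linarith
    rw [abs_of_nonneg h2]
    exact key b a hb ha hab

lemma ftc {x y : ℝ} (hxy : x ≤ y) {u u' : ℝ → ℝ}
    (hd : ∀ t ∈ Icc x y, HasDerivAt u (u' t) t) (hc : ContinuousOn u' (Icc x y)) :
    ∫ t in x..y, u' t = u y - u x := by
  apply intervalIntegral.integral_eq_sub_of_hasDerivAt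
  · intro t ht
    exact hd t (by rwa [uIcc_of_le hxy] at ht)
  · apply ContinuousOn.intervalIntegrable
    rwa [uIcc_of_le hxy]

lemma cont_shift_rpow (x γ : ℝ) (hγ : 0 ≤ γ) : Continuous fun t : ℝ => (t - x) ^ γ := by
  rw [continuous_iff_continuousAt]
  intro t
  exact (Real.continuousAt_rpow_const _ _ (Or.inr hγ)).comp
    ((continuous_id.sub continuous_const).continuousAt)

lemma int_step {x z C γ : ℝ} (hC : 0 ≤ C) (hγ : 0 ≤ γ) {u u' : ℝ → ℝ}
    (hd : ∀ t ∈ Icc x z, HasDerivAt u (u' t) t) (hc : ContinuousOn u' (Icc x z))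
    (h0 : u x = 0) (hb : ∀ t ∈ Icc x z, |u' t| ≤ C * (t - x) ^ γ) :
    ∀ y ∈ Icc x z, |u y| ≤ C * (y - x) ^ (γ + 1) := by
  intro y hy
  have hxy : x ≤ y := hy.1
  have hsub : Icc x y ⊆ Icc x z := Icc_subset_Icc le_rfl hy.2
  have hval : u y = ∫ t in x..y, u' t := by
    rw [ftc hxy (fun t ht => hd t (hsub ht)) (hc.mono hsub), h0, sub_zero]
  have hint1 : IntervalIntegrable (fun t => |u' t|) MeasureTheory.volume x y := by
    apply ContinuousOn.intervalIntegrable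
    rw [uIcc_of_le hxy]
    exact (hc.mono hsub).abs
  have hint2 : IntervalIntegrable (fun t => C * (t - x) ^ γ) MeasureTheory.volume x y :=
    (Continuous.intervalIntegrable (by exact continuous_const.mul (cont_shift_rpow x γ hγ)) x y)
  have h1 : |u y| ≤ ∫ t in x..y, |u' t| := by
    rw [hval]
    exact intervalIntegral.abs_integral_le_integral_abs hxy
  have h2 : (∫ t in x..y, |u' t|) ≤ ∫ t in x..y, C * (t - x) ^ γ :=
    intervalIntegral.integral_mono_on hxy hint1 hint2 (fun t ht => hb t (hsub ht))
  have h3 : (∫ t in x..y, C * (t - x) ^ γ) = C * ((y - x) ^ (γ + 1) / (γ + 1)) := by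
    rw [intervalIntegral.integral_const_mul]
    congr 1
    have := intervalIntegral.integral_comp_sub_right (a := x) (b := y)
      (fun s => s ^ γ) x
    rw [this, sub_self]
    rw [integral_rpow (Or.inl (by linarith : (-1:ℝ) < γ))]
    rw [Real.zero_rpow (by linarith : γ + 1 ≠ 0)]
    ring
  have h4 : C * ((y - x) ^ (γ + 1) / (γ + 1)) ≤ C * (y - x) ^ (γ + 1) := by
    apply mul_le_mul_of_nonneg_left _ hC
    have hpow : 0 ≤ (y - x) ^ (γ + 1) := Real.rpow_nonneg (by linarith) _
    exact div_le_self hpow (by linarith)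
  linarith

lemma lower_bd {x z v : ℝ} (hv : 0 < v) : ∀ (j : ℕ) (g : ℕ → ℝ → ℝ),
    (∀ i, i + 1 ≤ j → ∀ t ∈ Icc x z, HasDerivAt (g i) (g (i+1) t) t) →
    (∀ i, i ≤ j → ContinuousOn (g i) (Icc x z)) →
    (∀ i, i < j → g i x = 0) →
    (∀ t ∈ Icc x z, v ≤ g j t) →
    ∀ t ∈ Icc x z, v * (t - x) ^ j / (j.factorial : ℝ) ≤ g 0 t := by
  intro j
  induction j with
  | zero =>
    intro g _ _ _ hj t ht
    simpa using hj t ht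
  | succ j IH =>
    intro g hd hc h0 hj t ht
    have hxt : x ≤ t := ht.1
    have IH1 : ∀ s ∈ Icc x z, v * (s - x) ^ j / (j.factorial : ℝ) ≤ g 1 s := by
      apply IH (fun i => g (i+1))
      · intro i hi s hs
        exact hd (i+1) (by omega) s hs
      · intro i hi
        exact hc (i+1) (by omega)
      · intro i hi
        exact h0 (i+1) (by omega)
      · exact hj
    have hval : g 0 t = ∫ s in x..t, g 1 s := by
      have := ftc hxt (fun s hs => hd 0 (by omega) s (Icc_subset_Icc le_rfl ht.2 hs))
        ((hc 1 (by omega)).mono (Icc_subset_Icc le_rfl ht.2))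
      rw [this, h0 0 (by omega), sub_zero]
    have hint2 : IntervalIntegrable (g 1) MeasureTheory.volume x t := by
      apply ContinuousOn.intervalIntegrable
      rw [uIcc_of_le hxt]
      exact (hc 1 (by omega)).mono (Icc_subset_Icc le_rfl ht.2)
    have hint1 : IntervalIntegrable (fun s => v * (s - x) ^ j / (j.factorial : ℝ))
        MeasureTheory.volume x t := by
      exact Continuous.intervalIntegrable
        ((continuous_const.mul ((continuous_id.sub continuous_const).pow j)).div_const _) x t
    have h2 : (∫ s in x..t, v * (s - x) ^ j / (j.factorial : ℝ)) ≤ ∫ s in x..t, g 1 s := by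
      apply intervalIntegral.integral_mono_on hxt hint1 hint2
      intro s hs
      exact IH1 s (⟨hs.1, le_trans hs.2 ht.2⟩)
    have h3 : (∫ s in x..t, v * (s - x) ^ j / (j.factorial : ℝ))
        = v * (t - x) ^ (j+1) / ((j+1).factorial : ℝ) := by
      have heq : ∀ s : ℝ, v * (s - x) ^ j / (j.factorial : ℝ)
          = (v / (j.factorial : ℝ)) * (s - x) ^ j := by intro s; ring
      simp only [heq]
      rw [intervalIntegral.integral_const_mul]
      have hf2 : ((j:ℝ) + 1) = ((j+1 : ℕ) : ℝ) := by push_cast; ring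
      have := intervalIntegral.integral_comp_sub_right (a := x) (b := t)
        (fun s => s ^ j) x
      rw [this, sub_self, integral_pow]
      have hfact : ((j+1).factorial : ℝ) = ((j:ℝ)+1) * (j.factorial : ℝ) := by
        rw [Nat.factorial_succ]; push_cast; ring
      rw [zero_pow (by omega : j+1 ≠ 0), sub_zero, hfact,
        div_mul_div_comm, mul_comm ((j.factorial:ℝ)) ((j:ℝ)+1)]
    rw [hval]
    rw [h3] at h2
    exact h2

structure Chain5 (α e A B : ℝ) (g : ℕ → ℝ → ℝ) : Prop where
  hd : ∀ i, i ≤ 3 → ∀ x ∈ Ioo A B, HasDerivAt (g i) (g (i+1) x) x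
  ht : ∀ x ∈ Ioo A B, HasDerivAt (g 4) (e * Nfun α (g 0 x)) x
  hc : ∀ i, i ≤ 4 → ContinuousOn (g i) (Ioo A B)

lemma chain_of_contDiffOn {α e A B : ℝ} {f : ℝ → ℝ}
    (hf : ContDiffOn ℝ 5 f (Ioo A B))
    (heq : ∀ y ∈ Ioo A B, iteratedDerivWithin 5 f (Ioo A B) y = e * Nfun α (f y)) :
    Chain5 α e A B (fun i => iteratedDerivWithin i f (Ioo A B)) := by
  have hUD : UniqueDiffOn ℝ (Ioo A B) := isOpen_Ioo.uniqueDiffOn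
  have key : ∀ i : ℕ, i ≤ 4 → ∀ x ∈ Ioo A B,
      HasDerivAt (iteratedDerivWithin i f (Ioo A B))
        (iteratedDerivWithin (i+1) f (Ioo A B) x) x := by
    intro i hi x hx
    have hlt : (i : WithTop ℕ∞) < 5 := by
      exact_mod_cast Nat.lt_succ_of_le (by omega : i ≤ 4)
    have hdiff : DifferentiableOn ℝ (iteratedDerivWithin i f (Ioo A B)) (Ioo A B) :=
      hf.differentiableOn_iteratedDerivWithin hlt hUD
    have hda : HasDerivAt (iteratedDerivWithin i f (Ioo A B))
        (deriv (iteratedDerivWithin i f (Ioo A B)) x) x :=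
      (hdiff.differentiableAt (isOpen_Ioo.mem_nhds hx)).hasDerivAt
    have : iteratedDerivWithin (i+1) f (Ioo A B) x
        = deriv (iteratedDerivWithin i f (Ioo A B)) x := by
      rw [iteratedDerivWithin_succ,
        derivWithin_of_isOpen isOpen_Ioo hx]
    rw [this]
    exact hda
  constructor
  · intro i hi x hx
    exact key i (by omega) x hx
  · intro x hx
    have := key 4 (by omega) x hx
    rw [heq x hx] at this
    simpa [iteratedDerivWithin_zero] using this
  · intro i hi
    have hlt : (i : WithTop ℕ∞) < 5 := by
      exact_mod_cast Nat.lt_succ_of_le (by omega : i ≤ 4)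
    exact (hf.differentiableOn_iteratedDerivWithin hlt hUD).continuousOn

lemma chain_neg {α e A B : ℝ} {g : ℕ → ℝ → ℝ} (cg : Chain5 α e A B g) :
    Chain5 α e A B (fun i t => -(g i t)) := by
  constructor
  · intro i hi x hx
    exact (cg.hd i hi x hx).neg
  · intro x hx
    have := (cg.ht x hx).neg
    have heq : -(e * Nfun α (g 0 x)) = e * Nfun α (-(g 0 x)) := by
      rw [Nfun_neg]; ring
    rwa [heq] at this
  · intro i hi
    exact (cg.hc i hi).neg

lemma chain_reflect {α e A B : ℝ} {g : ℕ → ℝ → ℝ} (cg : Chain5 α e A B g) :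
    Chain5 α (-e) (-B) (-A) (fun i t => (-1:ℝ)^i * g i (-t)) := by
  have hmem : ∀ t : ℝ, t ∈ Ioo (-B) (-A) → -t ∈ Ioo A B := by
    intro t ht
    constructor <;> [linarith [ht.2]; linarith [ht.1]]
  have hcomp : ∀ i : ℕ, i ≤ 3 → ∀ t ∈ Ioo (-B) (-A),
      HasDerivAt (fun t => (-1:ℝ)^i * g i (-t)) ((-1:ℝ)^(i+1) * g (i+1) (-t)) t := by
    intro i hi t ht
    have h1 : HasDerivAt (fun t : ℝ => g i (-t)) (g (i+1) (-t) * (-1)) t :=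
      (cg.hd i hi (-t) (hmem t ht)).comp t (hasDerivAt_neg t)
    have h2 := h1.const_mul ((-1:ℝ)^i)
    refine h2.congr_deriv ?_
    rw [pow_succ]
    ring
  constructor
  · exact hcomp
  · intro t ht
    have h1 : HasDerivAt (fun t : ℝ => g 4 (-t)) (e * Nfun α (g 0 (-t)) * (-1)) t :=
      (cg.ht (-t) (hmem t ht)).comp t (hasDerivAt_neg t)
    have h2 := h1.const_mul ((-1:ℝ)^(4:ℕ))
    refine h2.congr_deriv ?_
    norm_num
  · intro i hi
    apply ContinuousOn.mul continuousOn_const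
    exact (cg.hc i hi).comp continuous_neg.continuousOn (fun t ht => hmem t ht)

lemma extinct {α e A B x y : ℝ} {g : ℕ → ℝ → ℝ} (hα : α ∈ Ioo (0:ℝ) 1) (he : |e| ≤ 1)
    (cg : Chain5 α e A B g) (hx : x ∈ Ioo A B) (hy : y ∈ Ioo A B) (hxy : x ≤ y)
    (hd2 : y - x ≤ 1/2) (h0 : ∀ i, i ≤ 4 → g i x = 0) :
    ∀ i, i ≤ 4 → |g i y| ≤ 2 * (y - x) := by
  have hsub : Icc x y ⊆ Ioo A B := Icc_subset_Ioo hx.1 hy.2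
  set φ : ℝ → ℝ := fun t => |g 0 t| ⊔ (|g 1 t| ⊔ (|g 2 t| ⊔ (|g 3 t| ⊔ |g 4 t|))) with hφ
  have hφc : ContinuousOn φ (Icc x y) := by
    have hci : ∀ i, i ≤ 4 → ContinuousOn (fun t => |g i t|) (Icc x y) :=
      fun i hi => ((cg.hc i hi).mono hsub).abs
    exact ((hci 0 (by omega)).sup ((hci 1 (by omega)).sup ((hci 2 (by omega)).sup
      ((hci 3 (by omega)).sup (hci 4 (by omega))))))
  obtain ⟨σ, hσ, hmax⟩ := (isCompact_Icc).exists_isMaxOn (nonempty_Icc.2 hxy) hφc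
  set S := φ σ with hSdef
  have hcomp : ∀ i, i ≤ 4 → ∀ t ∈ Icc x y, |g i t| ≤ S := by
    intro i hi t ht
    have h1 : |g i t| ≤ φ t := by
      interval_cases i <;> simp [hφ, le_max_iff]
    exact h1.trans (hmax ht)
  have hS0 : 0 ≤ S := le_trans (abs_nonneg (g 0 σ)) (hcomp 0 (by omega) σ hσ)
  have hxσ : x ≤ σ := hσ.1
  have hsub2 : Icc x σ ⊆ Icc x y := Icc_subset_Icc le_rfl hσ.2
  have hbd : ∀ i, i ≤ 4 → |g i σ| ≤ (y - x) * (S + 1) := by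
    intro i hi
    rcases Nat.lt_or_ge i 4 with hi4 | hi4
    · -- i ≤ 3
      have hftc : ∫ t in x..σ, g (i+1) t = g i σ - g i x :=
        ftc hxσ (fun t ht => cg.hd i (by omega) t (hsub (hsub2 ht)))
          (((cg.hc (i+1) (by omega)).mono hsub).mono hsub2)
      have hval : g i σ = ∫ t in x..σ, g (i+1) t := by
        rw [hftc, h0 i hi, sub_zero]
      rw [hval]
      have hb := intervalIntegral.norm_integral_le_of_norm_le_const
        (C := S) (f := fun t => g (i+1) t) (a := x) (b := σ) ?_
      · calc |∫ t in x..σ, g (i+1) t| ≤ S * |σ - x| := hb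
          _ ≤ S * (y - x) := by
              apply mul_le_mul_of_nonneg_left _ hS0
              rw [abs_of_nonneg (by linarith)]
              linarith [hσ.2]
          _ ≤ (y - x) * (S + 1) := by nlinarith
      · intro t ht
        rw [uIoc_of_le hxσ] at ht
        exact hcomp (i+1) (by omega) t (hsub2 ⟨le_of_lt ht.1, ht.2⟩)
    · -- i = 4
      have hi4' : i = 4 := by omega
      subst hi4'
      have hftc : ∫ t in x..σ, e * Nfun α (g 0 t) = g 4 σ - g 4 x :=
        ftc hxσ (fun t ht => cg.ht t (hsub (hsub2 ht)))
          (((contN hα.1).comp_continuousOn ((cg.hc 0 (by omega)).mono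
            (fun t ht => hsub (hsub2 ht)))).const_smul e)
      have hval : g 4 σ = ∫ t in x..σ, e * Nfun α (g 0 t) := by
        rw [hftc, h0 4 (by omega), sub_zero]
      rw [hval]
      have hb := intervalIntegral.norm_integral_le_of_norm_le_const
        (C := S + 1) (f := fun t => e * Nfun α (g 0 t)) (a := x) (b := σ) ?_
      · calc |∫ t in x..σ, e * Nfun α (g 0 t)| ≤ (S+1) * |σ - x| := hb
          _ ≤ (S+1) * (y - x) := by
              apply mul_le_mul_of_nonneg_left _ (by linarith)
              rw [abs_of_nonneg (by linarith)]
              linarith [hσ.2]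
          _ = (y - x) * (S + 1) := by ring
      · intro t ht
        rw [uIoc_of_le hxσ] at ht
        have ht' : t ∈ Icc x y := hsub2 ⟨le_of_lt ht.1, ht.2⟩
        have h1 : ‖e * Nfun α (g 0 t)‖ ≤ |Nfun α (g 0 t)| := by
          rw [Real.norm_eq_abs, abs_mul]
          calc |e| * |Nfun α (g 0 t)| ≤ 1 * |Nfun α (g 0 t)| :=
            mul_le_mul_of_nonneg_right he (abs_nonneg _)
          _ = |Nfun α (g 0 t)| := one_mul _
        calc ‖e * Nfun α (g 0 t)‖ ≤ |Nfun α (g 0 t)| := h1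
          _ ≤ |g 0 t| ^ α := abs_Nfun_le hα.1 _
          _ ≤ |g 0 t| + 1 := rpow_le_add_one (abs_nonneg _) hα.1.le hα.2.le
          _ ≤ S + 1 := by linarith [hcomp 0 (by omega) t ht']
  have hSle : S ≤ (y - x) * (S + 1) := by
    have := hbd
    rw [hSdef, hφ]
    simp only [sup_le_iff]
    exact ⟨hbd 0 (by omega), hbd 1 (by omega), hbd 2 (by omega), hbd 3 (by omega),
      hbd 4 (by omega)⟩
  have hS2 : S ≤ 2 * (y - x) := by nlinarith
  intro i hi
  exact le_trans (hcomp i hi y ⟨hxy, le_rfl⟩) hS2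

lemma local_uniq_pos {α e A B ys : ℝ} {g h : ℕ → ℝ → ℝ} (hα : α ∈ Ioo (0:ℝ) 1)
    (he : |e| ≤ 1) (cg : Chain5 α e A B g) (ch : Chain5 α e A B h) (hy : ys ∈ Ioo A B)
    (heq : ∀ i, i ≤ 4 → g i ys = h i ys) {j : ℕ} (hj4 : j ≤ 4)
    (hjpos : 0 < g j ys) (hjmin : ∀ i, i < j → g i ys = 0) :
    ∃ η > 0, Icc ys (ys+η) ⊆ Ioo A B ∧ EqOn (g 0) (h 0) (Icc ys (ys+η)) := by
  set v := g j ys with hv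
  -- Step 1: neighborhood where g j, h j ≥ v/2
  have hgc : ContinuousAt (g j) ys := (cg.hc j hj4).continuousAt (isOpen_Ioo.mem_nhds hy)
  have hhc : ContinuousAt (h j) ys := (ch.hc j hj4).continuousAt (isOpen_Ioo.mem_nhds hy)
  have hU : {σ : ℝ | v/2 < g j σ} ∩ ({σ : ℝ | v/2 < h j σ} ∩ Ioo A B) ∈ nhds ys := by
    apply Filter.inter_mem
    · exact hgc.preimage_mem_nhds (Ioi_mem_nhds (by linarith))
    apply Filter.inter_mem
    · exact hhc.preimage_mem_nhds (Ioi_mem_nhds (by rw [← heq j hj4]; linarith))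
    · exact isOpen_Ioo.mem_nhds hy
  obtain ⟨ε, hεpos, hball⟩ := Metric.mem_nhds_iff.1 hU
  set η₀ := ε/2 with hη₀
  have hη₀pos : 0 < η₀ := by positivity
  have hIcc0 : Icc ys (ys + η₀) ⊆ Metric.ball ys ε := by
    intro t ht
    rw [Metric.mem_ball, Real.dist_eq, abs_of_nonneg (by linarith [ht.1])]
    have := ht.2
    simp only [hη₀] at this ⊢
    linarith
  have hg2 : ∀ σ ∈ Icc ys (ys + η₀), v/2 ≤ g j σ ∧ v/2 ≤ h j σ ∧ σ ∈ Ioo A B := by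
    intro σ hσ
    have := hball (hIcc0 hσ)
    exact ⟨le_of_lt this.1, le_of_lt this.2.1, this.2.2⟩
  have hIccIoo : Icc ys (ys + η₀) ⊆ Ioo A B := fun σ hσ => (hg2 σ hσ).2.2
  -- Step 2: lower bounds
  have hv2 : 0 < v/2 := by linarith
  have glow : ∀ t ∈ Icc ys (ys + η₀), v/2 * (t - ys) ^ j / (j.factorial : ℝ) ≤ g 0 t := by
    apply lower_bd hv2 j g
    · intro i hi t ht
      exact cg.hd i (by omega) t (hIccIoo ht)
    · intro i hi
      exact (cg.hc i (by omega)).mono hIccIoo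
    · exact fun i hi => hjmin i hi
    · exact fun t ht => (hg2 t ht).1
  have hlow : ∀ t ∈ Icc ys (ys + η₀), v/2 * (t - ys) ^ j / (j.factorial : ℝ) ≤ h 0 t := by
    apply lower_bd hv2 j h
    · intro i hi t ht
      exact ch.hd i (by omega) t (hIccIoo ht)
    · intro i hi
      exact (ch.hc i (by omega)).mono hIccIoo
    · intro i hi
      rw [← heq i (by omega)]
      exact hjmin i hi
    · exact fun t ht => (hg2 t ht).2.1
  set c := v / 2 / (j.factorial : ℝ) with hcdef
  have hcpos : 0 < c := by
    apply div_pos hv2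
    exact_mod_cast j.factorial_pos
  have hrw : ∀ t : ℝ, v/2 * (t - ys) ^ j / (j.factorial : ℝ) = c * (t - ys) ^ j := by
    intro t; rw [hcdef]; ring
  -- Step 3: constants
  set L := α * c ^ (α - 1) with hLdef
  have hL0 : 0 ≤ L := mul_nonneg hα.1.le (Real.rpow_nonneg hcpos.le _)
  set γ₀ : ℝ := 5 + (j:ℝ) * (α - 1) with hγ₀def
  have hj4' : (j:ℝ) ≤ 4 := by exact_mod_cast hj4
  have hγ₀1 : 1 ≤ γ₀ := by nlinarith [hα.1, hα.2, Nat.cast_nonneg (α := ℝ) j]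
  set η := min η₀ (min 1 (1/(2*L+2))) with hηdef
  have hηpos : 0 < η := by
    apply lt_min hη₀pos
    apply lt_min one_pos
    positivity
  have hη1 : η ≤ 1 := le_trans (min_le_right _ _) (min_le_left _ _)
  have hηL : η ≤ 1/(2*L+2) := le_trans (min_le_right _ _) (min_le_right _ _)
  have hηη₀ : η ≤ η₀ := min_le_left _ _
  have hsub : Icc ys (ys + η) ⊆ Icc ys (ys + η₀) := Icc_subset_Icc le_rfl (by linarith)
  have hsubIoo : Icc ys (ys + η) ⊆ Ioo A B := fun σ hσ => hIccIoo (hsub hσ)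
  -- Lipschitz pointwise estimate
  have hlip : ∀ σ ∈ Icc ys (ys + η),
      |e * Nfun α (g 0 σ) - e * Nfun α (h 0 σ)|
        ≤ L * (σ - ys) ^ ((j:ℝ) * (α - 1)) * |g 0 σ - h 0 σ| := by
    intro σ hσ
    rcases eq_or_lt_of_le hσ.1 with hys | hys
    · have h00 : g 0 σ = h 0 σ := by rw [← hys]; exact heq 0 (by omega)
      simp [h00]
    · have hx' : 0 < σ - ys := by linarith
      have hm : 0 < c * (σ - ys) ^ j := by positivity
      have hga : c * (σ - ys) ^ j ≤ g 0 σ := by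
        rw [← hrw]; exact glow σ (hsub hσ)
      have hha : c * (σ - ys) ^ j ≤ h 0 σ := by
        rw [← hrw]; exact hlow σ (hsub hσ)
      have hNl := N_lip hα hm hga hha
      have hme : α * (c * (σ - ys) ^ j) ^ (α - 1)
          = L * (σ - ys) ^ ((j:ℝ) * (α - 1)) := by
        rw [Real.mul_rpow hcpos.le (by positivity), hLdef]
        rw [← Real.rpow_natCast (σ - ys) j, ← Real.rpow_mul hx'.le]
        ring
      calc |e * Nfun α (g 0 σ) - e * Nfun α (h 0 σ)|
          = |e| * |Nfun α (g 0 σ) - Nfun α (h 0 σ)| := by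
            rw [← abs_mul]; congr 1; ring
        _ ≤ 1 * |Nfun α (g 0 σ) - Nfun α (h 0 σ)| :=
            mul_le_mul_of_nonneg_right he (abs_nonneg _)
        _ = |Nfun α (g 0 σ) - Nfun α (h 0 σ)| := one_mul _
        _ ≤ α * (c * (σ - ys) ^ j) ^ (α - 1) * |g 0 σ - h 0 σ| := hNl
        _ = L * (σ - ys) ^ ((j:ℝ) * (α - 1)) * |g 0 σ - h 0 σ| := by rw [hme]
  -- difference chain facts
  have wd : ∀ i, i ≤ 3 → ∀ t ∈ Icc ys (ys + η),
      HasDerivAt (fun t => g i t - h i t) (g (i+1) t - h (i+1) t) t := by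
    intro i hi t ht
    exact (cg.hd i hi t (hsubIoo ht)).sub (ch.hd i hi t (hsubIoo ht))
  have wd4 : ∀ t ∈ Icc ys (ys + η),
      HasDerivAt (fun t => g 4 t - h 4 t)
        (e * Nfun α (g 0 t) - e * Nfun α (h 0 t)) t := by
    intro t ht
    exact (cg.ht t (hsubIoo ht)).sub (ch.ht t (hsubIoo ht))
  have w0 : ∀ i, i ≤ 4 → g i ys - h i ys = 0 := by
    intro i hi; rw [heq i hi, sub_self]
  have wc : ∀ i, i ≤ 4 → ContinuousOn (fun t => g i t - h i t) (Icc ys (ys + η)) := by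
    intro i hi
    exact ((cg.hc i hi).mono hsubIoo).sub ((ch.hc i hi).mono hsubIoo)
  have hcN : ContinuousOn (fun σ => e * Nfun α (g 0 σ) - e * Nfun α (h 0 σ))
      (Icc ys (ys + η)) := by
    apply ContinuousOn.sub
    · exact ((contN hα.1).comp_continuousOn ((cg.hc 0 (by omega)).mono hsubIoo)).const_smul e
    · exact ((contN hα.1).comp_continuousOn ((ch.hc 0 (by omega)).mono hsubIoo)).const_smul e
  -- the five-fold integration step
  have five : ∀ (C γ : ℝ), 0 ≤ C → 0 ≤ γ →
      (∀ σ ∈ Icc ys (ys + η),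
        |e * Nfun α (g 0 σ) - e * Nfun α (h 0 σ)| ≤ C * (σ - ys) ^ γ) →
      ∀ σ ∈ Icc ys (ys + η), |g 0 σ - h 0 σ| ≤ C * (σ - ys) ^ (γ + 1 + 1 + 1 + 1 + 1) := by
    intro C γ hC hγ hb
    have s4 := int_step hC hγ wd4 hcN (w0 4 (by omega)) hb
    have s3 := int_step hC (by linarith) (wd 3 (by omega)) (wc 4 (by omega))
      (w0 3 (by omega)) s4
    have s2 := int_step hC (by linarith) (wd 2 (by omega)) (wc 3 (by omega))
      (w0 2 (by omega)) s3
    have s1 := int_step hC (by linarith) (wd 1 (by omega)) (wc 2 (by omega))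
      (w0 1 (by omega)) s2
    have s0 := int_step hC (by linarith) (wd 0 (by omega)) (wc 1 (by omega))
      (w0 0 (by omega)) s1
    exact s0
  -- contraction property
  set P : ℝ → Prop := fun M => 0 ≤ M ∧ ∀ σ ∈ Icc ys (ys + η),
      |g 0 σ - h 0 σ| ≤ M * (σ - ys) ^ (5:ℝ) with hPdef
  have hhalf : ∀ M, P M → P (M/2) := by
    intro M ⟨hM0, hM⟩
    constructor
    · linarith
    · have hb5 : ∀ σ ∈ Icc ys (ys + η),
          |e * Nfun α (g 0 σ) - e * Nfun α (h 0 σ)| ≤ (L * M) * (σ - ys) ^ γ₀ := by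
        intro σ hσ
        rcases eq_or_lt_of_le hσ.1 with hys | hys
        · have h00 : g 0 σ = h 0 σ := by rw [← hys]; exact heq 0 (by omega)
          have hb0 : σ - ys = 0 := by rw [← hys]; ring
          have hγ₀ne : γ₀ ≠ 0 := (by linarith : (0:ℝ) < γ₀).ne'
          simp [h00, hb0, Real.zero_rpow hγ₀ne]
        · have hx' : 0 < σ - ys := by linarith
          calc |e * Nfun α (g 0 σ) - e * Nfun α (h 0 σ)|
              ≤ L * (σ - ys) ^ ((j:ℝ) * (α - 1)) * |g 0 σ - h 0 σ| := hlip σ hσ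
            _ ≤ L * (σ - ys) ^ ((j:ℝ) * (α - 1)) * (M * (σ - ys) ^ (5:ℝ)) := by
                apply mul_le_mul_of_nonneg_left (hM σ hσ)
                positivity
            _ = (L * M) * (σ - ys) ^ γ₀ := by
                rw [hγ₀def, show (5:ℝ) + (j:ℝ) * (α - 1) = (j:ℝ) * (α - 1) + 5 by ring,
                  Real.rpow_add hx']
                ring
      have hfive := five (L * M) γ₀ (by positivity) (by linarith) hb5
      intro σ hσ
      rcases eq_or_lt_of_le hσ.1 with hys | hys
      · have h00 : g 0 σ = h 0 σ := by rw [← hys]; exact heq 0 (by omega)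
        have hb0 : σ - ys = 0 := by rw [← hys]; ring
        simp [h00, hb0, Real.zero_rpow (by norm_num : (5:ℝ) ≠ 0)]
      · have hx' : 0 < σ - ys := by linarith
        have h1 : L * (σ - ys) ^ γ₀ ≤ 1/2 := by
          have e1 : (σ - ys) ^ γ₀ ≤ η ^ γ₀ := by
            apply Real.rpow_le_rpow hx'.le _ (by linarith)
            linarith [hσ.2]
          have e2 : η ^ γ₀ ≤ η := by
            calc η ^ γ₀ ≤ η ^ (1:ℝ) := Real.rpow_le_rpow_of_exponent_ge hηpos hη1 hγ₀1
              _ = η := Real.rpow_one η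
          have e4 : (σ - ys) ^ γ₀ ≤ 1/(2*L+2) := le_trans e1 (le_trans e2 hηL)
          have hpos : (0:ℝ) < 2*L+2 := by linarith
          calc L * (σ - ys) ^ γ₀ ≤ L * (1/(2*L+2)) := by
                apply mul_le_mul_of_nonneg_left e4 hL0
            _ ≤ 1/2 := by
                rw [mul_one_div, div_le_div_iff₀ hpos (by norm_num : (0:ℝ) < 2)]
                linarith
        calc |g 0 σ - h 0 σ| ≤ (L * M) * (σ - ys) ^ (γ₀ + 1 + 1 + 1 + 1 + 1) :=
              hfive σ hσ
          _ = (L * (σ - ys) ^ γ₀) * (M * (σ - ys) ^ (5:ℝ)) := by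
              rw [show γ₀ + 1 + 1 + 1 + 1 + 1 = γ₀ + 5 by ring, Real.rpow_add hx']
              ring
          _ ≤ (1/2) * (M * (σ - ys) ^ (5:ℝ)) := by
              apply mul_le_mul_of_nonneg_right h1
              positivity
          _ = M/2 * (σ - ys) ^ (5:ℝ) := by ring
  -- initial bound
  obtain ⟨C0, hC0⟩ := IsCompact.exists_bound_of_continuousOn isCompact_Icc hcN
  set B₀ := max C0 0 with hB₀def
  have hB₀0 : 0 ≤ B₀ := le_max_right _ _
  have hPB₀ : P B₀ := by
    constructor
    · exact hB₀0
    · have hb0 : ∀ σ ∈ Icc ys (ys + η),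
          |e * Nfun α (g 0 σ) - e * Nfun α (h 0 σ)| ≤ B₀ * (σ - ys) ^ (0:ℝ) := by
        intro σ hσ
        rw [Real.rpow_zero, mul_one]
        exact le_trans (hC0 σ hσ) (le_max_left _ _)
      have := five B₀ 0 hB₀0 le_rfl hb0
      intro σ hσ
      have h5 : (0:ℝ) + 1 + 1 + 1 + 1 + 1 = 5 := by norm_num
      rw [← h5]
      exact this σ hσ
  have hPn : ∀ n : ℕ, P (B₀ / 2 ^ n) := by
    intro n
    induction n with
    | zero => simpa using hPB₀
    | succ n ih =>
      have := hhalf _ ih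
      have heq2 : B₀ / 2 ^ n / 2 = B₀ / 2 ^ (n+1) := by
        rw [pow_succ]; ring
      rwa [heq2] at this
  -- conclude
  refine ⟨η, hηpos, hsubIoo, ?_⟩
  intro σ hσ
  have hK : 0 ≤ (σ - ys) ^ (5:ℝ) := Real.rpow_nonneg (by linarith [hσ.1]) _
  have hbnd : ∀ n : ℕ, |g 0 σ - h 0 σ| ≤ (B₀ * (σ - ys) ^ (5:ℝ)) * (1/2) ^ n := by
    intro n
    have := (hPn n).2 σ hσ
    have hrw2 : B₀ / 2 ^ n * (σ - ys) ^ (5:ℝ) = (B₀ * (σ - ys) ^ (5:ℝ)) * (1/2) ^ n := by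
      rw [one_div, inv_pow]; ring
    rwa [hrw2] at this
  have htend : Filter.Tendsto (fun n : ℕ => (B₀ * (σ - ys) ^ (5:ℝ)) * (1/2) ^ n)
      Filter.atTop (nhds 0) := by
    have := tendsto_pow_atTop_nhds_zero_of_lt_one (by norm_num : (0:ℝ) ≤ 1/2)
      (by norm_num : (1/2:ℝ) < 1)
    simpa using this.const_mul (B₀ * (σ - ys) ^ (5:ℝ))
  have hle0 : |g 0 σ - h 0 σ| ≤ 0 := ge_of_tendsto' htend hbnd
  have := abs_nonneg (g 0 σ - h 0 σ)
  have : g 0 σ - h 0 σ = 0 := by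
    apply abs_eq_zero.1
    linarith
  linarith [this]

lemma local_uniq {α e A B ys : ℝ} {g h : ℕ → ℝ → ℝ} (hα : α ∈ Ioo (0:ℝ) 1)
    (he : |e| ≤ 1) (cg : Chain5 α e A B g) (ch : Chain5 α e A B h) (hy : ys ∈ Ioo A B)
    (heq : ∀ i, i ≤ 4 → g i ys = h i ys) {j : ℕ} (hj4 : j ≤ 4)
    (hjne : g j ys ≠ 0) (hjmin : ∀ i, i < j → g i ys = 0) :
    ∃ η > 0, Icc ys (ys+η) ⊆ Ioo A B ∧ EqOn (g 0) (h 0) (Icc ys (ys+η)) := by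
  rcases lt_or_gt_of_ne hjne with hneg | hpos
  · obtain ⟨η, hη, hs, heqon⟩ := local_uniq_pos (g := fun i t => -(g i t))
      (h := fun i t => -(h i t)) hα he (chain_neg cg) (chain_neg ch) hy
      (fun i hi => by simp [heq i hi]) hj4 (by simpa using hneg)
      (fun i hi => by simp [hjmin i hi])
    refine ⟨η, hη, hs, ?_⟩
    intro σ hσ
    have := heqon hσ
    simpa using this
  · exact local_uniq_pos hα he cg ch hy heq hj4 hpos hjmin

lemma local_two {α e A B ys : ℝ} {g h : ℕ → ℝ → ℝ} (hα : α ∈ Ioo (0:ℝ) 1)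
    (he : |e| ≤ 1) (cg : Chain5 α e A B g) (ch : Chain5 α e A B h) (hy : ys ∈ Ioo A B)
    (heq : ∀ i, i ≤ 4 → g i ys = h i ys) (hne : ∃ i, i ≤ 4 ∧ g i ys ≠ 0) :
    ∃ η > 0, Ioo (ys-η) (ys+η) ⊆ Ioo A B ∧
      ∀ i, i ≤ 4 → EqOn (g i) (h i) (Ioo (ys-η) (ys+η)) := by
  classical
  obtain ⟨i₀, hi₀4, hi₀⟩ := hne
  have hex : ∃ k, g k ys ≠ 0 := ⟨i₀, hi₀⟩
  set j := Nat.find hex with hjdef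
  have hjne : g j ys ≠ 0 := Nat.find_spec hex
  have hj4 : j ≤ 4 := le_trans (Nat.find_min' hex hi₀) hi₀4
  have hjmin : ∀ i, i < j → g i ys = 0 := by
    intro i hi
    by_contra hne'
    exact (Nat.find_min hex hi) hne'
  -- right side
  obtain ⟨ηr, hηr, hsubr, heqr⟩ := local_uniq hα he cg ch hy heq hj4 hjne hjmin
  -- left side via reflection
  have he' : |(-e)| ≤ 1 := by rwa [abs_neg]
  have hy' : -ys ∈ Ioo (-B) (-A) := ⟨by linarith [hy.2], by linarith [hy.1]⟩
  obtain ⟨ηl, hηl, hsubl, heql⟩ := local_uniq hα he' (chain_reflect cg) (chain_reflect ch)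
    hy' (fun i hi => by simp [heq i hi]) hj4
    (by simpa using hjne) (fun i hi => by simp [hjmin i hi])
  set η := min ηr ηl with hηdef
  have hηpos : 0 < η := lt_min hηr hηl
  have hUsub : Ioo (ys - η) (ys + η) ⊆ Ioo A B := by
    intro t ht
    rcases le_total t ys with htl | htr
    · have : -t ∈ Icc (-ys) (-ys + ηl) := by
        constructor
        · linarith
        · have := ht.1
          have : ys - ηl ≤ t := by
            have hη2 : η ≤ ηl := min_le_right _ _
            linarith
          linarith
      have := hsubl this
      exact ⟨by linarith [this.2], by linarith [this.1]⟩
    · have : t ∈ Icc ys (ys + ηr) := by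
        constructor
        · exact htr
        · have hη1 : η ≤ ηr := min_le_left _ _
          linarith [ht.2]
      exact hsubr this
  have heq0 : EqOn (g 0) (h 0) (Ioo (ys - η) (ys + η)) := by
    intro t ht
    rcases le_total t ys with htl | htr
    · have hmem : -t ∈ Icc (-ys) (-ys + ηl) := by
        constructor
        · linarith
        · have hη2 : η ≤ ηl := min_le_right _ _
          have := ht.1
          linarith
      have := heql hmem
      simpa using this
    · apply heqr
      constructor
      · exact htr
      · have hη1 : η ≤ ηr := min_le_left _ _
        linarith [ht.2]
  refine ⟨η, hηpos, hUsub, ?_⟩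
  have hopen : IsOpen (Ioo (ys - η) (ys + η)) := isOpen_Ioo
  -- propagate to derivatives
  have main : ∀ i, i ≤ 4 → EqOn (g i) (h i) (Ioo (ys - η) (ys + η)) := by
    intro i
    induction i with
    | zero => intro _; exact heq0
    | succ i IH =>
      intro hi t ht
      have hIH := IH (by omega)
      have hgd : HasDerivAt (g i) (g (i+1) t) t := cg.hd i (by omega) t (hUsub ht)
      have hhd : HasDerivAt (h i) (h (i+1) t) t := ch.hd i (by omega) t (hUsub ht)
      have hee : g i =ᶠ[nhds t] h i :=
        Filter.eventuallyEq_of_mem (hopen.mem_nhds ht) hIH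
      have : deriv (g i) t = deriv (h i) t := Filter.EventuallyEq.deriv_eq hee
      rw [← hgd.deriv, ← hhd.deriv]
      exact this
  exact main

/-- Uniqueness for the IVP `f⁽⁵⁾ = ±|f|^{α-1}f`, `f⁽ʲ⁾(y₀) = α_j`,
`0 < α < 1`: if not all the `α_j` vanish, there is at most one `C⁵`
solution on some neighbourhood of `y₀`. -/
theorem stmt11 (α y₀ ε : ℝ) (a : Fin 5 → ℝ)
    (hα : α ∈ Ioo (0 : ℝ) 1) (hε : ε = 1 ∨ ε = -1)
    (ha : 0 < ∑ j : Fin 5, |a j|) :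
    ∃ δ > (0 : ℝ), ∀ f₁ f₂ : ℝ → ℝ,
      ContDiffOn ℝ 5 f₁ (Ioo (y₀ - δ) (y₀ + δ)) →
      ContDiffOn ℝ 5 f₂ (Ioo (y₀ - δ) (y₀ + δ)) →
      (∀ y ∈ Ioo (y₀ - δ) (y₀ + δ),
        iteratedDerivWithin 5 f₁ (Ioo (y₀ - δ) (y₀ + δ)) y = ε * (|f₁ y| ^ (α - 1) * f₁ y)) →
      (∀ y ∈ Ioo (y₀ - δ) (y₀ + δ),
        iteratedDerivWithin 5 f₂ (Ioo (y₀ - δ) (y₀ + δ)) y = ε * (|f₂ y| ^ (α - 1) * f₂ y)) →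
      (∀ j : Fin 5, iteratedDerivWithin j f₁ (Ioo (y₀ - δ) (y₀ + δ)) y₀ = a j) →
      (∀ j : Fin 5, iteratedDerivWithin j f₂ (Ioo (y₀ - δ) (y₀ + δ)) y₀ = a j) →
      EqOn f₁ f₂ (Ioo (y₀ - δ) (y₀ + δ)) := by
  set m := ∑ j : Fin 5, |a j| with hmdef
  have hm : 0 < m := ha
  set δ := min (1/2 : ℝ) (m/20) with hδdef
  have hδpos : 0 < δ := lt_min (by norm_num) (by positivity)
  have hδhalf : δ ≤ 1/2 := min_le_left _ _
  have hδm : δ ≤ m/20 := min_le_right _ _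
  refine ⟨δ, hδpos, ?_⟩
  intro f₁ f₂ hf₁ hf₂ hode1 hode2 hinit1 hinit2
  set I := Ioo (y₀ - δ) (y₀ + δ) with hIdef
  have he : |ε| ≤ 1 := by rcases hε with hh | hh <;> rw [hh] <;> norm_num
  have cg : Chain5 α ε (y₀ - δ) (y₀ + δ) (fun i => iteratedDerivWithin i f₁ I) :=
    chain_of_contDiffOn hf₁ (fun y hy => by rw [hode1 y hy]; rfl)
  have ch : Chain5 α ε (y₀ - δ) (y₀ + δ) (fun i => iteratedDerivWithin i f₂ I) :=
    chain_of_contDiffOn hf₂ (fun y hy => by rw [hode2 y hy]; rfl)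
  set g : ℕ → ℝ → ℝ := fun i => iteratedDerivWithin i f₁ I with hgdef
  set h : ℕ → ℝ → ℝ := fun i => iteratedDerivWithin i f₂ I with hhdef
  have hy₀ : y₀ ∈ I := ⟨by linarith, by linarith⟩
  have heqy₀ : ∀ i, i ≤ 4 → g i y₀ = h i y₀ := by
    intro i hi
    have h1 : g i y₀ = a ⟨i, by omega⟩ := hinit1 ⟨i, by omega⟩
    have h2 : h i y₀ = a ⟨i, by omega⟩ := hinit2 ⟨i, by omega⟩
    rw [h1, h2]
  -- no total rest points
  have hne_all : ∀ ys ∈ I, ∃ i, i ≤ 4 ∧ g i ys ≠ 0 := by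
    intro ys hys
    by_contra hcon
    push_neg at hcon
    have h0 : ∀ i, i ≤ 4 → g i ys = 0 := fun i hi => hcon i hi
    have habs : |ys - y₀| < δ := by
      rw [abs_sub_lt_iff]
      exact ⟨by linarith [hys.2], by linarith [hys.1]⟩
    have hbd : ∀ i : ℕ, i ≤ 4 → |g i y₀| ≤ 2 * |ys - y₀| := by
      intro i hi
      rcases le_total ys y₀ with hle | hle
      · have := extinct hα he cg hys hy₀ hle
          (by rw [abs_sub_comm] at habs; rw [abs_of_nonneg (by linarith)] at habs; linarith) h0
        have h2 := this i hi
        have habs2 : |ys - y₀| = y₀ - ys := by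
          rw [abs_sub_comm]; exact abs_of_nonneg (by linarith)
        rw [habs2]
        exact h2
      · have he' : |(-ε)| ≤ 1 := by rwa [abs_neg]
        have hys' : -ys ∈ Ioo (-(y₀ + δ)) (-(y₀ - δ)) :=
          ⟨by linarith [hys.2], by linarith [hys.1]⟩
        have hy₀' : -y₀ ∈ Ioo (-(y₀ + δ)) (-(y₀ - δ)) := ⟨by linarith, by linarith⟩
        have h0' : ∀ i, i ≤ 4 → ((-1:ℝ)^i * g i (-(-ys))) = 0 := by
          intro i hi
          simp [h0 i hi]
        have := extinct hα he' (chain_reflect cg) hys' hy₀' (by linarith)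
          (by rw [abs_of_nonneg (by linarith)] at habs; linarith) h0'
        have h2 := this i hi
        simp only [neg_neg] at h2
        rw [abs_mul, abs_pow, abs_neg, abs_one, one_pow, one_mul] at h2
        rw [abs_of_nonneg (by linarith : (0:ℝ) ≤ ys - y₀)]
        linarith [h2]
    have hsum : m ≤ 10 * |ys - y₀| := by
      have : ∀ jj : Fin 5, |a jj| ≤ 2 * |ys - y₀| := by
        intro jj
        have h1 : g jj.val y₀ = a jj := by
          have := hinit1 jj
          exact this
        rw [← h1]
        exact hbd jj.val (by omega)
      calc m = ∑ jj : Fin 5, |a jj| := hmdef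
        _ ≤ ∑ _jj : Fin 5, 2 * |ys - y₀| := Finset.sum_le_sum (fun jj _ => this jj)
        _ = 5 * (2 * |ys - y₀|) := by
            rw [Finset.sum_const, Finset.card_univ, Fintype.card_fin, nsmul_eq_mul]
            norm_num
        _ = 10 * |ys - y₀| := by ring
    have : (10:ℝ) * |ys - y₀| < 10 * δ := by linarith
    linarith
  -- the agreement set
  set T : Set ℝ := {y | y ∈ I ∧ ∀ i, i ≤ 4 → g i y = h i y} with hTdef
  have hTopen : IsOpen T := by
    rw [isOpen_iff_mem_nhds]
    intro ys hys
    obtain ⟨η, hηpos, hUsub, heqs⟩ := local_two hα he cg ch hys.1 hys.2 (hne_all ys hys.1)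
    apply Filter.mem_of_superset (isOpen_Ioo.mem_nhds
      (show ys ∈ Ioo (ys - η) (ys + η) from ⟨by linarith, by linarith⟩))
    intro t ht
    exact ⟨hUsub ht, fun i hi => heqs i hi ht⟩
  have hclos : closure T ∩ I ⊆ T := by
    intro y ⟨hyc, hyI⟩
    refine ⟨hyI, fun i hi => ?_⟩
    have hgc : ContinuousAt (g i) y := (cg.hc i hi).continuousAt (isOpen_Ioo.mem_nhds hyI)
    have hhc : ContinuousAt (h i) y := (ch.hc i hi).continuousAt (isOpen_Ioo.mem_nhds hyI)
    have hnb : (nhdsWithin y T).NeBot := mem_closure_iff_nhdsWithin_neBot.1 hyc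
    have t1 : Filter.Tendsto (g i) (nhdsWithin y T) (nhds (g i y)) :=
      hgc.continuousWithinAt
    have t2 : Filter.Tendsto (h i) (nhdsWithin y T) (nhds (h i y)) :=
      hhc.continuousWithinAt
    have hev : (h i) =ᶠ[nhdsWithin y T] (g i) := by
      filter_upwards [self_mem_nhdsWithin] with t ht
      exact (ht.2 i hi).symm
    exact tendsto_nhds_unique (t2.congr' hev) t1 |>.symm
  have hfinal : I ⊆ T := by
    apply isPreconnected_Ioo.subset_of_closure_inter_subset hTopen
    · exact ⟨y₀, hy₀, ⟨hy₀, heqy₀⟩⟩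
    · exact hclos
  intro y hy
  have := (hfinal hy).2 0 (by omega)
  simpa [hgdef, hhdef, iteratedDerivWithin_zero] using this
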